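/- There exists an absolute constant C > 0 such that every complex root x of a cubic polynomial P(x) = c₀ + c₁x + c₂x² + c₃x³ with real coefficients and c₃ ≠ 0 satisfies |x| ≤ C·H_d(P)/|c₃|. -/

import Mathlib

/-- The height `H_d` of a cubic polynomial `c₀ + c₁x + c₂x² + c₃x³` with real
coefficients. -/
noncomputable def Hd (c : Fin 4 → ℝ) : ℝ :=
  max |c 2| (max |c 3| (max (|c 1 * c 2| ^ ((1 : ℝ) / 2))
    (max (|c 0 * c 2 ^ 3| ^ ((1 : ℝ) / 4)) (max (|c 0 * c 3| ^ ((1 : ℝ) / 2))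
      (max (|c 1 ^ 3 * c 3| ^ ((1 : ℝ) / 4)) (|c 0 * c 1 * c 2 * c 3| ^ ((1 : ℝ) / 4)))))))

/-- There is an absolute constant `C > 0` such that every complex root `z` of a real
cubic polynomial `c₀ + c₁x + c₂x² + c₃x³` with `c₃ ≠ 0` satisfies
`|z| ≤ C·H_d(P)/|c₃|`. -/
theorem stmt15 :
    ∃ C : ℝ, 0 < C ∧
      ∀ c : Fin 4 → ℝ, c 3 ≠ 0 →
        ∀ z : ℂ,
          (c 0 : ℂ) + (c 1 : ℂ) * z + (c 2 : ℂ) * z ^ 2 + (c 3 : ℂ) * z ^ 3 = 0 →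
          ‖z‖ ≤ C * Hd c / |c 3| := by
  refine ⟨2, by norm_num, ?_⟩
  intro c hc3 z hz
  set H := Hd c with hHdef
  set A := |c 3| with hAdef
  set t := ‖z‖ with htdef
  have ht0 : 0 ≤ t := norm_nonneg z
  have hA0 : 0 < A := abs_pos.mpr hc3
  have hHA : A ≤ H := le_max_of_le_right (le_max_left _ _)
  have hH0 : 0 < H := lt_of_lt_of_le hA0 hHA
  have hc2 : |c 2| ≤ H := le_max_left _ _
  -- |c0| * A ≤ H^2
  have h03 : |c 0| * A ≤ H ^ 2 := by
    have h : |c 0 * c 3| ^ ((1 : ℝ) / 2) ≤ H :=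
      le_max_of_le_right (le_max_of_le_right (le_max_of_le_right (le_max_of_le_right (le_max_left _ _))))
    have h2 := pow_le_pow_left₀ (Real.rpow_nonneg (abs_nonneg _) _) h 2
    rw [← Real.rpow_natCast (|c 0 * c 3| ^ ((1 : ℝ) / 2)) 2, ← Real.rpow_mul (abs_nonneg _)] at h2
    norm_num at h2
    calc |c 0| * A = |c 0 * c 3| := (abs_mul _ _).symm
    _ ≤ H ^ 2 := by rw [abs_mul]; exact h2
  -- |c1|^3 * A ≤ H^4
  have h13 : |c 1| ^ 3 * A ≤ H ^ 4 := by
    have h : |c 1 ^ 3 * c 3| ^ ((1 : ℝ) / 4) ≤ H :=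
      le_max_of_le_right (le_max_of_le_right (le_max_of_le_right (le_max_of_le_right
        (le_max_of_le_right (le_max_left _ _)))))
    have h2 := pow_le_pow_left₀ (Real.rpow_nonneg (abs_nonneg _) _) h 4
    rw [← Real.rpow_natCast (|c 1 ^ 3 * c 3| ^ ((1 : ℝ) / 4)) 4, ← Real.rpow_mul (abs_nonneg _)] at h2
    norm_num at h2
    calc |c 1| ^ 3 * A = |c 1 ^ 3 * c 3| := by rw [abs_mul, abs_pow]
    _ ≤ H ^ 4 := by rw [abs_mul, abs_pow]; exact h2
  -- |c1| * A ≤ H^2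
  have h1 : |c 1| * A ≤ H ^ 2 := by
    have h3 : (|c 1| * A) ^ 3 ≤ (H ^ 2) ^ 3 := by
      calc (|c 1| * A) ^ 3 = (|c 1| ^ 3 * A) * A ^ 2 := by ring
        _ ≤ H ^ 4 * A ^ 2 := mul_le_mul_of_nonneg_right h13 (sq_nonneg A)
        _ ≤ H ^ 4 * H ^ 2 := by
            have : A ^ 2 ≤ H ^ 2 := pow_le_pow_left₀ hA0.le hHA 2
            nlinarith [pow_nonneg hH0.le 4]
        _ = (H ^ 2) ^ 3 := by ring
    exact le_of_pow_le_pow_left₀ (by norm_num) (sq_nonneg H) h3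
  -- |c0| * A^2 ≤ H^3
  have h0 : |c 0| * A ^ 2 ≤ H ^ 3 := by nlinarith [mul_le_mul_of_nonneg_right h03 hA0.le, pow_le_pow_left₀ hA0.le hHA 1]
  -- key inequality from the root equation
  have hz' : (c 3 : ℂ) * z ^ 3 = -((c 0 : ℂ) + (c 1 : ℂ) * z + (c 2 : ℂ) * z ^ 2) := by
    linear_combination hz
  have key : A * t ^ 3 ≤ |c 0| + |c 1| * t + |c 2| * t ^ 2 := by
    have e1 : A * t ^ 3 = ‖((c 0 : ℂ) + (c 1 : ℂ) * z + (c 2 : ℂ) * z ^ 2)‖ := by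
      rw [hAdef, htdef, ← Real.norm_eq_abs, ← Complex.norm_real, ← norm_pow, ← norm_mul, hz', norm_neg]
    rw [e1]
    calc ‖((c 0 : ℂ) + (c 1 : ℂ) * z + (c 2 : ℂ) * z ^ 2)‖
        ≤ ‖((c 0 : ℂ) + (c 1 : ℂ) * z)‖ + ‖((c 2 : ℂ) * z ^ 2)‖ :=
          norm_add_le _ _
      _ ≤ ‖(c 0 : ℂ)‖ + ‖((c 1 : ℂ) * z)‖ + ‖((c 2 : ℂ) * z ^ 2)‖ := by
          gcongr; exact norm_add_le _ _
      _ = |c 0| + |c 1| * t + |c 2| * t ^ 2 := by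
          simp [norm_mul, norm_pow, Complex.norm_real, Real.norm_eq_abs, htdef]
  -- conclude
  rw [le_div_iff₀ hA0]
  by_contra hcon
  push_neg at hcon
  have hst : 2 * H < t * A := hcon
  have ht0' : 0 < t := by nlinarith
  -- multiply key by A^2
  have key2 : A ^ 3 * t ^ 3 ≤ H ^ 3 + H ^ 2 * (A * t) + H * (A * t) ^ 2 := by
    have := mul_le_mul_of_nonneg_right key (sq_nonneg A)
    nlinarith [mul_le_mul_of_nonneg_right h1 (mul_nonneg ht0 (mul_nonneg hA0.le hA0.le)), mul_le_mul_of_nonneg_right hc2 (mul_nonneg (mul_nonneg ht0 ht0) (mul_nonneg hA0.le hA0.le))]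
  nlinarith [mul_pos hA0 ht0', sq_nonneg (A * t), mul_pos (mul_pos hA0 ht0') (mul_pos hA0 ht0'), mul_pos hH0 (mul_pos (mul_pos hA0 ht0') (mul_pos hA0 ht0')), mul_pos (mul_pos hH0 hH0) (mul_pos hA0 ht0'), mul_pos (mul_pos hH0 hH0) hH0]
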